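/- Let d ≥ 1, let A ⊂ ℝ^d be compact and Riemann measurable with |A| > 0, let X_1, X_2, … be i.i.d. uniform random points in A, and let B ⊆ A. Fix k ∈ ℕ. For each t > 0 let Z_t be an ℕ-valued random variable, Poisson distributed with mean t and independent of the sequence (X_1, X_2, …), and set R'_{t,k} := R_{Z_t,k} (with R_{0,k} := +∞). Let a, b ∈ (0,∞), c ∈ ℝ, and let F be a continuous cumulative distribution function. If lim_{t→∞} P[ a·t·(R'_{t,k})^d − b·log t − c·log log t ≤ γ ] = F(γ) for every γ ∈ ℝ, then lim_{n→∞} P[ a·n·R_{n,k}^d − b·log n − c·log log n ≤ γ ] = F(γ) for every γ ∈ ℝ. -/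

import Mathlib

open MeasureTheory Metric Filter Topology
open scoped Nat NNReal ENNReal

noncomputable section

/-- Every point of `B` has at least `k` of the points `X 0, …, X (n-1)` within distance `r`. -/
def covers {d : ℕ} (X : ℕ → EuclideanSpace ℝ (Fin d)) (n k : ℕ)
    (B : Set (EuclideanSpace ℝ (Fin d))) (r : ℝ) : Prop :=
  ∀ x ∈ B, k ≤ {i : ℕ | i < n ∧ X i ∈ closedBall x r}.ncard

/-- The `k`-coverage threshold `R_{n,k}`, as an extended real (`+∞` if no radius works). -/
def covThresh {d : ℕ} (X : ℕ → EuclideanSpace ℝ (Fin d)) (n k : ℕ)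
    (B : Set (EuclideanSpace ℝ (Fin d))) : EReal :=
  sInf {ρ : EReal | ∃ r : ℝ, ρ = (r : EReal) ∧ 0 < r ∧ covers X n k B r}


lemma covThresh_nonneg {d : ℕ} (X : ℕ → EuclideanSpace ℝ (Fin d)) (n k : ℕ)
    (B : Set (EuclideanSpace ℝ (Fin d))) : 0 ≤ covThresh X n k B := by
  apply le_sInf
  rintro ρ ⟨r, rfl, hr, -⟩
  exact_mod_cast hr.le

lemma covers_mono {d : ℕ} (X : ℕ → EuclideanSpace ℝ (Fin d)) {n m k : ℕ} (hnm : n ≤ m)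
    (B : Set (EuclideanSpace ℝ (Fin d))) (r : ℝ) (h : covers X n k B r) :
    covers X m k B r := by
  intro x hx
  refine (h x hx).trans (Set.ncard_le_ncard ?_ ?_)
  · exact fun i hi => ⟨hi.1.trans_le hnm, hi.2⟩
  · exact (Set.finite_Iio m).subset fun i hi => hi.1

lemma covThresh_antitone {d : ℕ} (X : ℕ → EuclideanSpace ℝ (Fin d)) {n m k : ℕ} (hnm : n ≤ m)
    (B : Set (EuclideanSpace ℝ (Fin d))) :
    covThresh X m k B ≤ covThresh X n k B := by
  apply sInf_le_sInf
  rintro ρ ⟨r, rfl, hr, hc⟩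
  exact ⟨r, rfl, hr, covers_mono X hnm B r hc⟩

lemma EReal.top_pow_of_pos {d : ℕ} (hd : 1 ≤ d) : (⊤ : EReal) ^ d = ⊤ := by
  induction d with
  | zero => omega
  | succ m ih =>
    rcases Nat.eq_or_lt_of_le (Nat.one_le_iff_ne_zero.mpr (by omega) : 1 ≤ m + 1) with h | h
    · simp [← h]
    · rw [pow_succ, ih (by omega)]
      exact EReal.top_mul_top

/-- Characterization of the event inequality. -/
lemma event_iff {d : ℕ} (hd : 1 ≤ d) (x : EReal) (hx : 0 ≤ x) {s : ℝ} (hs : 0 < s)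
    (q q' γ : ℝ) :
    ((s : EReal) * x ^ d - (q : EReal) - (q' : EReal) ≤ (γ : EReal)) ↔
      ∃ r : ℝ, 0 ≤ r ∧ x = (r : EReal) ∧ s * r ^ d - q - q' ≤ γ := by
  induction x using EReal.rec with
  | bot => exact absurd hx (by simp)
  | coe r =>
    constructor
    · intro h
      refine ⟨r, by exact_mod_cast hx, rfl, ?_⟩
      rw [← EReal.coe_pow, ← EReal.coe_mul, ← EReal.coe_sub, ← EReal.coe_sub,
        EReal.coe_le_coe_iff] at h
      exact h
    · rintro ⟨r', -, hr', h⟩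
      rw [show r = r' by exact_mod_cast hr']
      rw [← EReal.coe_pow, ← EReal.coe_mul, ← EReal.coe_sub, ← EReal.coe_sub,
        EReal.coe_le_coe_iff]
      exact h
  | top =>
    constructor
    · intro h
      exfalso
      rw [EReal.top_pow_of_pos hd, EReal.coe_mul_top_of_pos hs, EReal.top_sub_coe,
        EReal.top_sub_coe] at h
      exact absurd h (by simp)
    · rintro ⟨r, -, hr, -⟩
      exact absurd hr (by simp)

lemma exists_coe_of_nonneg_of_le {x : EReal} (hx : 0 ≤ x) {r : ℝ} (hxr : x ≤ (r : EReal)) :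
    ∃ r' : ℝ, 0 ≤ r' ∧ r' ≤ r ∧ x = (r' : EReal) := by
  induction x using EReal.rec with
  | bot => exact absurd hx (by simp)
  | coe y => exact ⟨y, by exact_mod_cast hx, by exact_mod_cast hxr, rfl⟩
  | top => exact absurd hxr (by simp [EReal.coe_lt_top])

section Helpers
open Real ProbabilityTheory


lemma hasSum_exp_div (r : ℝ) : HasSum (fun j : ℕ => r ^ j / j !) (exp r) := by
  rw [exp_eq_exp_ℝ]
  exact NormedSpace.expSeries_div_hasSum_exp r

lemma hasSum_moment1 (r : ℝ) : HasSum (fun j : ℕ => (j : ℝ) * (r ^ j / j !)) (r * exp r) := by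
  have h : HasSum (fun j : ℕ => ((j + 1 : ℕ) : ℝ) * (r ^ (j + 1) / (j + 1)!)) (r * exp r) := by
    have := (hasSum_exp_div r).mul_left r
    convert this using 2 with j
    rfl
    push_cast [Nat.factorial_succ]
    have hj : ((j : ℝ) + 1) ≠ 0 := by positivity
    have hf : ((j ! : ℝ)) ≠ 0 := by exact_mod_cast (Nat.factorial_pos j).ne'
    field_simp
    ring
  have := (hasSum_nat_add_iff' (f := fun j : ℕ => (j : ℝ) * (r ^ j / j !)) 1).mp (by simpa using h)
  simpa using this

lemma hasSum_moment2 (r : ℝ) :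
    HasSum (fun j : ℕ => (j : ℝ) * ((j : ℝ) - 1) * (r ^ j / j !)) (r ^ 2 * exp r) := by
  have h : HasSum (fun j : ℕ => ((j + 2 : ℕ) : ℝ) * (((j + 2 : ℕ) : ℝ) - 1) * (r ^ (j + 2) / (j + 2)!))
      (r ^ 2 * exp r) := by
    have := (hasSum_exp_div r).mul_left (r ^ 2)
    convert this using 2 with j
    rfl
    have hf : ((j ! : ℝ)) ≠ 0 := by exact_mod_cast (Nat.factorial_pos j).ne'
    have h1 : ((j : ℝ) + 1) ≠ 0 := by positivity
    have h2 : ((j : ℝ) + 2) ≠ 0 := by positivity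
    push_cast [Nat.factorial_succ]
    field_simp
    ring
  have h' : HasSum (fun j : ℕ => ((j+2 : ℕ) : ℝ) * (((j+2 : ℕ) : ℝ) - 1) * (r ^ (j+2) / (j+2)!))
      (r ^ 2 * exp r - ∑ i ∈ Finset.range 2, (i : ℝ) * ((i : ℝ) - 1) * (r ^ i / i !)) := by
    simpa [Finset.sum_range_succ] using h
  have := (hasSum_nat_add_iff' (f := fun j : ℕ => (j : ℝ) * ((j : ℝ) - 1) * (r ^ j / j !)) 2).mp h'
  simpa using this

lemma hasSum_poisson_var (r : ℝ≥0) :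
    HasSum (fun j : ℕ => ((j : ℝ) - r) ^ 2 * poissonPMFReal r j) r := by
  have h := (((hasSum_moment2 r).add ((hasSum_moment1 r).mul_left (1 - 2 * (r : ℝ)))).add
    ((hasSum_exp_div r).mul_left ((r : ℝ) ^ 2))).mul_left (exp (-(r : ℝ)))
  convert h using 1
  · rfl
  · funext j
    unfold poissonPMFReal
    ring
  · rw [exp_neg]
    field_simp [exp_ne_zero]
    ring

lemma poisson_tail (r : ℝ≥0) {δ : ℝ} (hδ : 0 < δ) (S : Set ℕ)
    (hS : ∀ j ∈ S, δ ≤ |(j : ℝ) - r|) :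
    (poissonPMF r).toMeasure S ≤ ENNReal.ofReal ((r : ℝ) / δ ^ 2) := by
  rw [PMF.toMeasure_apply (hs := MeasurableSet.of_discrete (s := S))]
  set g : ℕ → ℝ := fun j => (δ ^ 2)⁻¹ * (((j : ℝ) - r) ^ 2 * poissonPMFReal r j) with hg
  have hgsum : HasSum g ((δ ^ 2)⁻¹ * r) := (hasSum_poisson_var r).mul_left _
  have hgnn : ∀ j, 0 ≤ g j := fun j => by
    have := poissonPMFReal_nonneg (r := r) (n := j)
    positivity
  calc ∑' j, S.indicator (⇑(poissonPMF r)) j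
      ≤ ∑' j, ENNReal.ofReal (g j) := by
        apply ENNReal.tsum_le_tsum
        intro j
        by_cases hj : j ∈ S
        · rw [Set.indicator_of_mem hj]
          have h1 : (poissonPMF r) j = ENNReal.ofReal (poissonPMFReal r j) := rfl
          rw [h1]
          apply ENNReal.ofReal_le_ofReal
          have hδ2 : 0 < δ ^ 2 := by positivity
          have h2 : δ ^ 2 ≤ ((j : ℝ) - r) ^ 2 := by
            have := hS j hj
            calc δ ^ 2 ≤ |(j : ℝ) - r| ^ 2 := by
                  apply pow_le_pow_left₀ hδ.le this
              _ = ((j : ℝ) - r) ^ 2 := sq_abs _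
          have h3 : (1 : ℝ) ≤ (δ ^ 2)⁻¹ * ((j : ℝ) - r) ^ 2 := by
            rw [← div_eq_inv_mul, le_div_iff₀ hδ2, one_mul]
            exact h2
          calc poissonPMFReal r j = 1 * poissonPMFReal r j := (one_mul _).symm
            _ ≤ ((δ ^ 2)⁻¹ * ((j : ℝ) - r) ^ 2) * poissonPMFReal r j :=
                mul_le_mul_of_nonneg_right h3 poissonPMFReal_nonneg
            _ = g j := by rw [hg]; ring
        · rw [Set.indicator_of_notMem hj]
          exact zero_le
    _ = ENNReal.ofReal ((δ ^ 2)⁻¹ * r) := by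
        rw [← ENNReal.ofReal_tsum_of_nonneg hgnn hgsum.summable, hgsum.tsum_eq]
    _ = ENNReal.ofReal ((r : ℝ) / δ ^ 2) := by rw [div_eq_inv_mul, mul_comm]


/-- `n^{-1/3} log n → 0` as a sequence. -/
lemma tendsto_rpow_third_log :
    Tendsto (fun n : ℕ => Real.log n / (n : ℝ) ^ ((1:ℝ)/3)) atTop (𝓝 0) :=
  ((isLittleO_log_rpow_atTop (by norm_num : (0:ℝ) < 1/3)).tendsto_div_nhds_zero).comp
    tendsto_natCast_atTop_atTop

lemma tendsto_npow_third : Tendsto (fun n : ℕ => ((n : ℝ) ^ ((1:ℝ)/3))⁻¹) atTop (𝓝 0) := by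
  have : Tendsto (fun x : ℝ => x ^ (-(1/3 : ℝ))) atTop (𝓝 0) := tendsto_rpow_neg_atTop (by norm_num)
  have h := this.comp (tendsto_natCast_atTop_atTop (R := ℝ))
  apply h.congr'
  filter_upwards [eventually_gt_atTop 0] with n hn
  rw [Function.comp_apply, Real.rpow_neg (by positivity)]

/-- difference of logs tends to zero. -/
lemma logdiff {v w : ℕ → ℝ} (hv : Tendsto v atTop atTop)
    (hratio : Tendsto (fun n => w n / v n) atTop (𝓝 1)) :
    Tendsto (fun n => Real.log (w n) - Real.log (v n)) atTop (𝓝 0) := by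
  have hvpos : ∀ᶠ n in atTop, 0 < v n := hv.eventually (eventually_gt_atTop 0)
  have hwpos : ∀ᶠ n in atTop, 0 < w n / v n := hratio.eventually (eventually_gt_nhds one_pos)
  have hlog : Tendsto (fun n => Real.log (w n / v n)) atTop (𝓝 0) := by
    have := (Real.continuousAt_log one_ne_zero).tendsto.comp hratio
    simpa [Function.comp_def] using this
  apply hlog.congr'
  filter_upwards [hvpos, hwpos] with n h1 h2
  have hw : 0 < w n := by
    have := mul_pos h2 h1
    rwa [div_mul_cancel₀] at this
    exact h1.ne'
  rw [Real.log_div hw.ne' h1.ne']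

lemma tendsto_atTop_of_ratio {v w : ℕ → ℝ} (hv : Tendsto v atTop atTop)
    (hratio : Tendsto (fun n => w n / v n) atTop (𝓝 1)) : Tendsto w atTop atTop := by
  have h2 : ∀ᶠ n in atTop, (1:ℝ)/2 ≤ w n / v n :=
    hratio.eventually (eventually_ge_nhds (by norm_num))
  have hvpos : ∀ᶠ n in atTop, 0 < v n := hv.eventually (eventually_gt_atTop 0)
  apply tendsto_atTop_mono' _ _ (hv.const_mul_atTop (by norm_num : (0:ℝ) < 1/2))
  filter_upwards [h2, hvpos] with n h1 h0
  calc 1/2 * v n = 1/2 * v n := rfl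
    _ ≤ (w n / v n) * v n := by nlinarith
    _ = w n := by field_simp

lemma loglogdiff {v w : ℕ → ℝ} (hv : Tendsto v atTop atTop)
    (hratio : Tendsto (fun n => w n / v n) atTop (𝓝 1)) :
    Tendsto (fun n => Real.log (Real.log (w n)) - Real.log (Real.log (v n))) atTop (𝓝 0) := by
  have hw : Tendsto w atTop atTop := tendsto_atTop_of_ratio hv hratio
  have hlv : Tendsto (fun n => Real.log (v n)) atTop atTop :=
    Real.tendsto_log_atTop.comp hv
  have hld : Tendsto (fun n => Real.log (w n) - Real.log (v n)) atTop (𝓝 0) :=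
    logdiff hv hratio
  have hratio2 : Tendsto (fun n => Real.log (w n) / Real.log (v n)) atTop (𝓝 1) := by
    have h1 : Tendsto (fun n => (Real.log (w n) - Real.log (v n)) / Real.log (v n) + 1)
        atTop (𝓝 1) := by
      have := hld.div_atTop hlv
      simpa using this.add tendsto_const_nhds
    apply h1.congr'
    filter_upwards [hlv.eventually (eventually_gt_atTop 0)] with n hn
    field_simp
    ring
  exact logdiff hlv hratio2

/-- The master asymptotic lemma. -/
lemma asymp_pair (b c γ : ℝ) {v w : ℕ → ℝ}
    (hv : Tendsto v atTop atTop)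
    (hratio : Tendsto (fun n => w n / v n) atTop (𝓝 1))
    (hprod : Tendsto (fun n => (w n / v n - 1) * Real.log (v n)) atTop (𝓝 0)) :
    Tendsto (fun n => (w n / v n) * (γ + b * Real.log (v n) + c * Real.log (Real.log (v n)))
      - (b * Real.log (w n) + c * Real.log (Real.log (w n)))) atTop (𝓝 γ) := by
  have hld := logdiff hv hratio
  have hlld := loglogdiff hv hratio
  have hprod2 : Tendsto (fun n => (w n / v n - 1) * Real.log (Real.log (v n))) atTop (𝓝 0) := by
    have habs : Tendsto (fun n => |(w n / v n - 1) * Real.log (v n)|) atTop (𝓝 0) := by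
      simpa using hprod.abs
    apply squeeze_zero_norm' _ habs
    have hlv : Tendsto (fun n => Real.log (v n)) atTop atTop := Real.tendsto_log_atTop.comp hv
    filter_upwards [hlv.eventually (eventually_ge_atTop 1)] with n hn
    have h0 : (0:ℝ) ≤ Real.log (Real.log (v n)) := Real.log_nonneg hn
    have h1 : Real.log (Real.log (v n)) ≤ Real.log (v n) :=
      (Real.log_le_self (by linarith)).trans le_rfl
    rw [Real.norm_eq_abs, abs_mul, abs_mul]
    apply mul_le_mul_of_nonneg_left _ (abs_nonneg _)
    rw [abs_of_nonneg h0, abs_of_nonneg (by linarith : (0:ℝ) ≤ Real.log (v n))]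
    exact h1
  have key : Tendsto (fun n => γ * (w n / v n)
      + b * ((w n / v n - 1) * Real.log (v n) - (Real.log (w n) - Real.log (v n)))
      + c * ((w n / v n - 1) * Real.log (Real.log (v n))
          - (Real.log (Real.log (w n)) - Real.log (Real.log (v n))))) atTop
      (𝓝 (γ * 1 + b * (0 - 0) + c * (0 - 0))) := by
    exact ((hratio.const_mul γ).add ((hprod.sub hld).const_mul b)).add
      ((hprod2.sub hlld).const_mul c)
  have heq : (γ * 1 + b * (0-0) + c * (0-0)) = γ := by ring
  rw [heq] at key
  refine key.congr fun n => ?_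
  ring

def tpf (n : ℕ) : ℝ := (n : ℝ) + (n : ℝ) ^ ((2:ℝ)/3)
def tmf (n : ℕ) : ℝ := (n : ℝ) - (n : ℝ) ^ ((2:ℝ)/3)

lemma rpow23_div {n : ℕ} (hn : 1 ≤ n) :
    (n : ℝ) ^ ((2:ℝ)/3) / (n : ℝ) = (((n : ℝ) ^ ((1:ℝ)/3)))⁻¹ := by
  have hn0 : (0:ℝ) < n := by exact_mod_cast hn
  have h13 : (0:ℝ) < (n : ℝ) ^ ((1:ℝ)/3) := Real.rpow_pos_of_pos hn0 _
  have key : (n:ℝ) ^ ((2:ℝ)/3) * (n:ℝ) ^ ((1:ℝ)/3) = n := by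
    rw [← Real.rpow_add hn0]
    norm_num
  field_simp
  linarith [key]

lemma tpf_div {n : ℕ} (hn : 1 ≤ n) : tpf n / n = 1 + (((n : ℝ) ^ ((1:ℝ)/3)))⁻¹ := by
  have hn0 : (0:ℝ) < n := by exact_mod_cast hn
  rw [tpf, add_div, div_self hn0.ne', rpow23_div hn]

lemma tmf_div {n : ℕ} (hn : 1 ≤ n) : tmf n / n = 1 - (((n : ℝ) ^ ((1:ℝ)/3)))⁻¹ := by
  have hn0 : (0:ℝ) < n := by exact_mod_cast hn
  rw [tmf, sub_div, div_self hn0.ne', rpow23_div hn]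

lemma tpf_ratio : Tendsto (fun n : ℕ => tpf n / n) atTop (𝓝 1) := by
  have := tendsto_const_nhds (x := (1:ℝ)) (f := atTop (α := ℕ)) |>.add tendsto_npow_third
  rw [add_zero] at this
  apply this.congr'
  filter_upwards [eventually_ge_atTop 1] with n hn
  rw [tpf_div hn]

lemma tmf_ratio : Tendsto (fun n : ℕ => tmf n / n) atTop (𝓝 1) := by
  have := tendsto_const_nhds (x := (1:ℝ)) (f := atTop (α := ℕ)) |>.sub tendsto_npow_third
  rw [sub_zero] at this
  apply this.congr'
  filter_upwards [eventually_ge_atTop 1] with n hn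
  rw [tmf_div hn]

lemma tmf_atTop : Tendsto tmf atTop atTop :=
  tendsto_atTop_of_ratio tendsto_natCast_atTop_atTop tmf_ratio

lemma tpf_atTop : Tendsto tpf atTop atTop :=
  tendsto_atTop_of_ratio tendsto_natCast_atTop_atTop tpf_ratio

lemma asymp_up (b c γ : ℝ) :
    Tendsto (fun n : ℕ => (tpf n / n) * (γ + b * Real.log n + c * Real.log (Real.log n))
      - (b * Real.log (tpf n) + c * Real.log (Real.log (tpf n)))) atTop (𝓝 γ) := by
  apply asymp_pair b c γ tendsto_natCast_atTop_atTop tpf_ratio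
  apply tendsto_rpow_third_log.congr'
  filter_upwards [eventually_ge_atTop 1] with n hn
  rw [tpf_div hn]
  rw [div_eq_inv_mul]
  ring

lemma asymp_lo (b c γ : ℝ) :
    Tendsto (fun n : ℕ => ((n : ℝ) / tmf n) * (γ + b * Real.log (tmf n)
        + c * Real.log (Real.log (tmf n)))
      - (b * Real.log n + c * Real.log (Real.log n))) atTop (𝓝 γ) := by
  have hratio : Tendsto (fun n : ℕ => (n : ℝ) / tmf n) atTop (𝓝 1) := by
    have h := (tmf_ratio.inv₀ one_ne_zero).congr (fun n => inv_div (tmf n) (n : ℝ))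
    simpa using h
  apply asymp_pair b c γ tmf_atTop hratio
  apply squeeze_zero' _ _ (show Tendsto (fun n : ℕ => 2 * (Real.log n / (n:ℝ) ^ ((1:ℝ)/3)))
    atTop (𝓝 0) by simpa using tendsto_rpow_third_log.const_mul 2)
  · filter_upwards [eventually_ge_atTop 1, tmf_atTop.eventually (eventually_ge_atTop 1)]
      with n hn htm
    have hn0 : (0:ℝ) < n := by exact_mod_cast hn
    have h23 : (0:ℝ) ≤ (n:ℝ) ^ ((2:ℝ)/3) := Real.rpow_nonneg hn0.le _
    have htmn : tmf n ≤ (n : ℝ) := by rw [tmf]; linarith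
    have h1 : (1:ℝ) ≤ (n:ℝ) / tmf n := by
      rw [le_div_iff₀ (by linarith : (0:ℝ) < tmf n)]
      linarith
    have h2 : (0:ℝ) ≤ Real.log (tmf n) := Real.log_nonneg htm
    nlinarith
  · filter_upwards [eventually_ge_atTop 1, tmf_atTop.eventually (eventually_ge_atTop 1),
      tmf_ratio.eventually (eventually_ge_nhds (by norm_num : (1:ℝ)/2 < 1))]
      with n hn htm hhalf
    have hn0 : (0:ℝ) < n := by exact_mod_cast hn
    have htm0 : (0:ℝ) < tmf n := by linarith
    have htmn : tmf n ≤ (n : ℝ) := by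
      rw [tmf]
      have : (0:ℝ) ≤ (n:ℝ) ^ ((2:ℝ)/3) := Real.rpow_nonneg hn0.le _
      linarith
    have hhalf' : (n:ℝ) / 2 ≤ tmf n := by
      rw [le_div_iff₀ hn0] at hhalf
      linarith
    have hgap : (n : ℝ) / tmf n - 1 = (n:ℝ) ^ ((2:ℝ)/3) / tmf n := by
      rw [div_sub_one htm0.ne']
      congr 1
      rw [tmf]
      ring
    have hb1 : (n:ℝ) ^ ((2:ℝ)/3) / tmf n ≤ 2 * ((n:ℝ) ^ ((1:ℝ)/3))⁻¹ := by
      have h23 : (0:ℝ) ≤ (n:ℝ) ^ ((2:ℝ)/3) := Real.rpow_nonneg hn0.le _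
      calc (n:ℝ) ^ ((2:ℝ)/3) / tmf n ≤ (n:ℝ) ^ ((2:ℝ)/3) / ((n:ℝ)/2) := by
            gcongr
        _ = 2 * ((n:ℝ) ^ ((2:ℝ)/3) / n) := by field_simp
        _ = 2 * ((n:ℝ) ^ ((1:ℝ)/3))⁻¹ := by rw [rpow23_div hn]
    have hlog : Real.log (tmf n) ≤ Real.log n := Real.log_le_log htm0 htmn
    have hlog0 : (0:ℝ) ≤ Real.log (tmf n) := Real.log_nonneg htm
    have h13 : (0:ℝ) < ((n:ℝ) ^ ((1:ℝ)/3))⁻¹ := by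
      have := Real.rpow_pos_of_pos hn0 ((1:ℝ)/3)
      positivity
    calc ((n : ℝ) / tmf n - 1) * Real.log (tmf n)
        ≤ (2 * ((n:ℝ) ^ ((1:ℝ)/3))⁻¹) * Real.log n := by
          rw [hgap]
          apply mul_le_mul hb1 hlog hlog0 (by positivity)
      _ = 2 * (Real.log n / (n:ℝ) ^ ((1:ℝ)/3)) := by
          rw [div_eq_inv_mul]; ring

lemma frac_bound {n : ℕ} (hn : 1 ≤ n) {y : ℝ} (hy : y ≤ 2 * n) :
    y / ((n:ℝ) ^ ((2:ℝ)/3)) ^ 2 ≤ 2 * (((n:ℝ) ^ ((1:ℝ)/3)))⁻¹ := by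
  have hn0 : (0:ℝ) < n := by exact_mod_cast hn
  have hd : ((n:ℝ) ^ ((2:ℝ)/3)) ^ 2 = (n:ℝ) ^ ((4:ℝ)/3) := by
    rw [sq, ← Real.rpow_add hn0]
    norm_num
  have key : (n:ℝ) ^ ((4:ℝ)/3) = (n:ℝ) ^ ((1:ℝ)/3) * n := by
    rw [show ((4:ℝ)/3) = (1:ℝ)/3 + 1 by norm_num, Real.rpow_add hn0, Real.rpow_one]
  have h13 : (0:ℝ) < (n:ℝ) ^ ((1:ℝ)/3) := Real.rpow_pos_of_pos hn0 _
  have h43 : (0:ℝ) < (n:ℝ) ^ ((4:ℝ)/3) := Real.rpow_pos_of_pos hn0 _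
  calc y / ((n:ℝ) ^ ((2:ℝ)/3)) ^ 2 = y / (n:ℝ) ^ ((4:ℝ)/3) := by rw [hd]
    _ ≤ (2 * n) / (n:ℝ) ^ ((4:ℝ)/3) := by gcongr
    _ = 2 * (((n:ℝ) ^ ((1:ℝ)/3)))⁻¹ := by
        rw [key]
        field_simp

end Helpers

lemma event_transfer {d : ℕ} (hd : 1 ≤ d) (X : ℕ → EuclideanSpace ℝ (Fin d)) {n m k : ℕ}
    (hnm : n ≤ m) (B : Set (EuclideanSpace ℝ (Fin d))) {s s' q q' u u' γ γ' : ℝ}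
    (hs : 0 < s) (hs' : 0 < s')
    (hL : (s'/s) * (γ + q + q') ≤ γ' + u + u')
    (h : (s : EReal) * (covThresh X n k B) ^ d - (q : EReal) - (q' : EReal) ≤ (γ : EReal)) :
    (s' : EReal) * (covThresh X m k B) ^ d - (u : EReal) - (u' : EReal) ≤ (γ' : EReal) := by
  obtain ⟨r, hr0, hxr, hineq⟩ :=
    (event_iff hd _ (covThresh_nonneg X n k B) hs q q' γ).mp h
  obtain ⟨r', hr'0, hr'r, hx'⟩ := exists_coe_of_nonneg_of_le (covThresh_nonneg X m k B)
    (hxr ▸ covThresh_antitone X hnm B)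
  refine (event_iff hd _ (covThresh_nonneg X m k B) hs' u u' γ').mpr ⟨r', hr'0, hx', ?_⟩
  have h1 : s * r ^ d ≤ γ + q + q' := by linarith
  have h2 : r' ^ d ≤ r ^ d := pow_le_pow_left₀ hr'0 hr'r d
  have h3 : s' * r' ^ d ≤ s' * r ^ d := mul_le_mul_of_nonneg_left h2 hs'.le
  have h4 : s' * r ^ d = (s'/s) * (s * r ^ d) := by field_simp
  have h5 : (s'/s) * (s * r ^ d) ≤ (s'/s) * (γ + q + q') :=
    mul_le_mul_of_nonneg_left h1 (by positivity)
  linarith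

theorem dePoissonization
    {d : ℕ} (hd : 1 ≤ d)
    {Ω : Type*} [MeasurableSpace Ω] (P : Measure Ω) [IsProbabilityMeasure P]
    (A B : Set (EuclideanSpace ℝ (Fin d)))
    (hAcompact : IsCompact A) (hARiemann : volume (frontier A) = 0) (hApos : 0 < volume A)
    (hBA : B ⊆ A)
    (X : ℕ → Ω → EuclideanSpace ℝ (Fin d))
    (hXmeas : ∀ i, Measurable (X i))
    (hXunif : ∀ i, Measure.map (X i) P = (volume A)⁻¹ • volume.restrict A)
    (hXindep : ProbabilityTheory.iIndepFun X P)
    (Z : ℝ → Ω → ℕ)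
    (hZmeas : ∀ t, Measurable (Z t))
    (hZpoisson : ∀ t : ℝ, 0 < t →
      Measure.map (Z t) P = (ProbabilityTheory.poissonPMF t.toNNReal).toMeasure)
    (hZindep : ∀ t : ℝ, 0 < t →
      ProbabilityTheory.IndepFun (Z t) (fun ω => fun i => X i ω) P)
    (k : ℕ) (hk : 1 ≤ k)
    (a b c : ℝ) (ha : 0 < a) (hb : 0 < b)
    (F : ℝ → ℝ) (hFcont : Continuous F) (hFmono : Monotone F)
    (hF0 : Tendsto F atBot (𝓝 0)) (hF1 : Tendsto F atTop (𝓝 1))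
    (hconv : ∀ γ : ℝ,
      Tendsto
        (fun t : ℝ =>
          (P {ω : Ω |
            ((a * t : ℝ) : EReal) * (covThresh (fun i => X i ω) (Z t ω) k B) ^ d
              - ((b * Real.log t : ℝ) : EReal)
              - ((c * Real.log (Real.log t) : ℝ) : EReal)
              ≤ ((γ : ℝ) : EReal)}).toReal)
        atTop (𝓝 (F γ))) :
    ∀ γ : ℝ,
      Tendsto
        (fun n : ℕ =>
          (P {ω : Ω |
            ((a * (n : ℝ) : ℝ) : EReal) * (covThresh (fun i => X i ω) n k B) ^ d
              - ((b * Real.log (n : ℝ) : ℝ) : EReal)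
              - ((c * Real.log (Real.log (n : ℝ)) : ℝ) : EReal)
              ≤ ((γ : ℝ) : EReal)}).toReal)
        atTop (𝓝 (F γ)) := by
  intro γ
  -- notation
  set E : ℕ → Set Ω := fun n => {ω : Ω |
      ((a * (n : ℝ) : ℝ) : EReal) * (covThresh (fun i => X i ω) n k B) ^ d
        - ((b * Real.log (n : ℝ) : ℝ) : EReal)
        - ((c * Real.log (Real.log (n : ℝ)) : ℝ) : EReal)
        ≤ ((γ : ℝ) : EReal)} with hE
  set PE : ℝ → ℝ → Set Ω := fun t γ' => {ω : Ω |
      ((a * t : ℝ) : EReal) * (covThresh (fun i => X i ω) (Z t ω) k B) ^ d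
        - ((b * Real.log t : ℝ) : EReal)
        - ((c * Real.log (Real.log t) : ℝ) : EReal)
        ≤ ((γ' : ℝ) : EReal)} with hPEdef
  have hPE : ∀ γ' : ℝ, Tendsto (fun t : ℝ => (P (PE t γ')).toReal) atTop (𝓝 (F γ')) :=
    fun γ' => hconv γ'
  -- Poisson error terms
  have herrp : Tendsto (fun n : ℕ => (P {ω | Z (tpf n) ω < n}).toReal) atTop (𝓝 0) := by
    apply squeeze_zero' (Eventually.of_forall fun n => ENNReal.toReal_nonneg)
      _ (show Tendsto (fun n : ℕ => 2 * (((n:ℝ) ^ ((1:ℝ)/3))⁻¹)) atTop (𝓝 0) by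
          simpa using tendsto_npow_third.const_mul 2)
    filter_upwards [eventually_ge_atTop 1] with n hn
    have hn0 : (0:ℝ) < n := by exact_mod_cast hn
    have h23 : (0:ℝ) < (n:ℝ) ^ ((2:ℝ)/3) := Real.rpow_pos_of_pos hn0 _
    have htp0 : (0:ℝ) < tpf n := by rw [tpf]; linarith
    have hmap : P {ω | Z (tpf n) ω < n}
        = (ProbabilityTheory.poissonPMF (tpf n).toNNReal).toMeasure {j : ℕ | j < n} := by
      rw [← hZpoisson _ htp0, Measure.map_apply (hZmeas _) MeasurableSet.of_discrete]
      rfl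
    have hcoe : (((tpf n).toNNReal : ℝ)) = tpf n := Real.coe_toNNReal _ htp0.le
    have htail : (ProbabilityTheory.poissonPMF (tpf n).toNNReal).toMeasure {j : ℕ | j < n}
        ≤ ENNReal.ofReal (tpf n / ((n:ℝ) ^ ((2:ℝ)/3)) ^ 2) := by
      have hb := poisson_tail (tpf n).toNNReal (δ := (n:ℝ) ^ ((2:ℝ)/3)) h23 {j : ℕ | j < n} ?_
      · rwa [hcoe] at hb
      · intro j hj
        simp only [Set.mem_setOf_eq] at hj
        rw [hcoe]
        have hj1 : (j:ℝ) + 1 ≤ n := by exact_mod_cast hj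
        have hgap : (n:ℝ) ^ ((2:ℝ)/3) ≤ tpf n - j := by rw [tpf]; linarith
        calc (n:ℝ) ^ ((2:ℝ)/3) ≤ tpf n - j := hgap
          _ = -((j:ℝ) - tpf n) := by ring
          _ ≤ |(j:ℝ) - tpf n| := neg_le_abs _
    calc (P {ω | Z (tpf n) ω < n}).toReal
        ≤ (ENNReal.ofReal (tpf n / ((n:ℝ) ^ ((2:ℝ)/3)) ^ 2)).toReal := by
          rw [hmap]
          exact ENNReal.toReal_mono ENNReal.ofReal_ne_top htail
      _ = tpf n / ((n:ℝ) ^ ((2:ℝ)/3)) ^ 2 :=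
          ENNReal.toReal_ofReal (div_nonneg htp0.le (by positivity))
      _ ≤ 2 * (((n:ℝ) ^ ((1:ℝ)/3))⁻¹) := by
          apply frac_bound hn
          have h1 : (n:ℝ) ^ ((2:ℝ)/3) ≤ (n:ℝ) := by
            calc (n:ℝ) ^ ((2:ℝ)/3) ≤ (n:ℝ) ^ (1:ℝ) :=
                Real.rpow_le_rpow_of_exponent_le (by exact_mod_cast hn) (by norm_num)
              _ = n := Real.rpow_one _
          rw [tpf]
          linarith
  have herrm : Tendsto (fun n : ℕ => (P {ω | n < Z (tmf n) ω}).toReal) atTop (𝓝 0) := by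
    apply squeeze_zero' (Eventually.of_forall fun n => ENNReal.toReal_nonneg)
      _ (show Tendsto (fun n : ℕ => 2 * (((n:ℝ) ^ ((1:ℝ)/3))⁻¹)) atTop (𝓝 0) by
          simpa using tendsto_npow_third.const_mul 2)
    filter_upwards [eventually_ge_atTop 1,
      tmf_atTop.eventually (eventually_ge_atTop 1)] with n hn htm
    have hn0 : (0:ℝ) < n := by exact_mod_cast hn
    have h23 : (0:ℝ) < (n:ℝ) ^ ((2:ℝ)/3) := Real.rpow_pos_of_pos hn0 _
    have htm0 : (0:ℝ) < tmf n := by linarith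
    have hmap : P {ω | n < Z (tmf n) ω}
        = (ProbabilityTheory.poissonPMF (tmf n).toNNReal).toMeasure {j : ℕ | n < j} := by
      rw [← hZpoisson _ htm0, Measure.map_apply (hZmeas _) MeasurableSet.of_discrete]
      rfl
    have hcoe : (((tmf n).toNNReal : ℝ)) = tmf n := Real.coe_toNNReal _ htm0.le
    have htail : (ProbabilityTheory.poissonPMF (tmf n).toNNReal).toMeasure {j : ℕ | n < j}
        ≤ ENNReal.ofReal (tmf n / ((n:ℝ) ^ ((2:ℝ)/3)) ^ 2) := by
      have hb := poisson_tail (tmf n).toNNReal (δ := (n:ℝ) ^ ((2:ℝ)/3)) h23 {j : ℕ | n < j} ?_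
      · rwa [hcoe] at hb
      · intro j hj
        simp only [Set.mem_setOf_eq] at hj
        rw [hcoe]
        have hj1 : (n:ℝ) + 1 ≤ j := by exact_mod_cast hj
        have hgap : (n:ℝ) ^ ((2:ℝ)/3) ≤ (j:ℝ) - tmf n := by rw [tmf]; linarith
        calc (n:ℝ) ^ ((2:ℝ)/3) ≤ (j:ℝ) - tmf n := hgap
          _ ≤ |(j:ℝ) - tmf n| := le_abs_self _
    calc (P {ω | n < Z (tmf n) ω}).toReal
        ≤ (ENNReal.ofReal (tmf n / ((n:ℝ) ^ ((2:ℝ)/3)) ^ 2)).toReal := by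
          rw [hmap]
          exact ENNReal.toReal_mono ENNReal.ofReal_ne_top htail
      _ = tmf n / ((n:ℝ) ^ ((2:ℝ)/3)) ^ 2 :=
          ENNReal.toReal_ofReal (div_nonneg htm0.le (by positivity))
      _ ≤ 2 * (((n:ℝ) ^ ((1:ℝ)/3))⁻¹) := by
          apply frac_bound hn
          have h1 : (0:ℝ) ≤ (n:ℝ) ^ ((2:ℝ)/3) := h23.le
          rw [tmf]
          linarith
  -- eventual sandwich inequalities
  have hup : ∀ ε : ℝ, 0 < ε → ∀ᶠ n : ℕ in atTop,
      (P (E n)).toReal ≤ (P (PE (tpf n) (γ + ε))).toReal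
        + (P {ω | Z (tpf n) ω < n}).toReal := by
    intro ε hε
    have hLas : ∀ᶠ n : ℕ in atTop,
        (tpf n / n) * (γ + b * Real.log n + c * Real.log (Real.log n))
          - (b * Real.log (tpf n) + c * Real.log (Real.log (tpf n))) ≤ γ + ε :=
      (asymp_up b c γ).eventually (eventually_le_nhds (by linarith))
    filter_upwards [eventually_ge_atTop 1, hLas] with n hn hL
    have hn0 : (0:ℝ) < n := by exact_mod_cast hn
    have htp : (n:ℝ) ≤ tpf n := by
      rw [tpf]
      have : (0:ℝ) ≤ (n:ℝ) ^ ((2:ℝ)/3) := Real.rpow_nonneg hn0.le _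
      linarith
    have hincl : E n ⊆ PE (tpf n) (γ + ε) ∪ {ω | Z (tpf n) ω < n} := by
      intro ω hω
      by_cases hz : Z (tpf n) ω < n
      · exact Or.inr hz
      · push_neg at hz
        left
        show ((a * tpf n : ℝ) : EReal) * (covThresh (fun i => X i ω) (Z (tpf n) ω) k B) ^ d
          - ((b * Real.log (tpf n) : ℝ) : EReal)
          - ((c * Real.log (Real.log (tpf n)) : ℝ) : EReal) ≤ ((γ + ε : ℝ) : EReal)
        refine event_transfer hd (fun i => X i ω) hz B
          (mul_pos ha hn0) (mul_pos ha (lt_of_lt_of_le hn0 htp)) ?_ hω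
        rw [mul_div_mul_left _ _ ha.ne']
        linarith
    have hm : P (E n) ≤ P (PE (tpf n) (γ + ε)) + P {ω | Z (tpf n) ω < n} :=
      (measure_mono hincl).trans (measure_union_le _ _)
    have h1 : (P (E n)).toReal
        ≤ (P (PE (tpf n) (γ + ε)) + P {ω | Z (tpf n) ω < n}).toReal :=
      ENNReal.toReal_mono
        (ENNReal.add_ne_top.mpr ⟨measure_ne_top _ _, measure_ne_top _ _⟩) hm
    rwa [ENNReal.toReal_add (measure_ne_top _ _) (measure_ne_top _ _)] at h1
  have hlo : ∀ ε : ℝ, 0 < ε → ∀ᶠ n : ℕ in atTop,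
      (P (PE (tmf n) (γ - ε))).toReal ≤ (P (E n)).toReal
        + (P {ω | n < Z (tmf n) ω}).toReal := by
    intro ε hε
    have hLas : ∀ᶠ n : ℕ in atTop,
        ((n : ℝ) / tmf n) * ((γ - ε) + b * Real.log (tmf n)
            + c * Real.log (Real.log (tmf n)))
          - (b * Real.log n + c * Real.log (Real.log n)) ≤ γ :=
      (asymp_lo b c (γ - ε)).eventually (eventually_le_nhds (by linarith))
    filter_upwards [eventually_ge_atTop 1,
      tmf_atTop.eventually (eventually_ge_atTop 1), hLas] with n hn htm hL
    have hn0 : (0:ℝ) < n := by exact_mod_cast hn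
    have htm0 : (0:ℝ) < tmf n := by linarith
    have hincl : PE (tmf n) (γ - ε) ⊆ E n ∪ {ω | n < Z (tmf n) ω} := by
      intro ω hω
      by_cases hz : n < Z (tmf n) ω
      · exact Or.inr hz
      · push_neg at hz
        left
        show ((a * (n : ℝ) : ℝ) : EReal) * (covThresh (fun i => X i ω) n k B) ^ d
          - ((b * Real.log (n : ℝ) : ℝ) : EReal)
          - ((c * Real.log (Real.log (n : ℝ)) : ℝ) : EReal) ≤ ((γ : ℝ) : EReal)
        refine event_transfer hd (fun i => X i ω) hz B
          (mul_pos ha htm0) (mul_pos ha hn0) ?_ hω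
        rw [mul_div_mul_left _ _ ha.ne']
        linarith
    have hm : P (PE (tmf n) (γ - ε)) ≤ P (E n) + P {ω | n < Z (tmf n) ω} :=
      (measure_mono hincl).trans (measure_union_le _ _)
    have h1 : (P (PE (tmf n) (γ - ε))).toReal
        ≤ (P (E n) + P {ω | n < Z (tmf n) ω}).toReal :=
      ENNReal.toReal_mono
        (ENNReal.add_ne_top.mpr ⟨measure_ne_top _ _, measure_ne_top _ _⟩) hm
    rwa [ENNReal.toReal_add (measure_ne_top _ _) (measure_ne_top _ _)] at h1
  -- conclude
  refine tendsto_order.2 ⟨?_, ?_⟩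
  · intro x hx
    have hcont : Tendsto (fun ε : ℝ => F (γ - ε)) (𝓝 0) (𝓝 (F γ)) := by
      have h1 : Tendsto (fun ε : ℝ => γ - ε) (𝓝 0) (𝓝 γ) := by
        have := (tendsto_const_nhds (x := γ) (f := 𝓝 (0:ℝ))).sub tendsto_id
        simpa using this
      exact (hFcont.tendsto γ).comp h1
    have h2 : ∀ᶠ ε in 𝓝[>] (0:ℝ), x < F (γ - ε) :=
      eventually_nhdsWithin_of_eventually_nhds (hcont.eventually (eventually_gt_nhds hx))
    obtain ⟨ε, hxF, hε⟩ := (h2.and self_mem_nhdsWithin).exists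
    have hcomp : Tendsto (fun n : ℕ => (P (PE (tmf n) (γ - ε))).toReal) atTop
        (𝓝 (F (γ - ε))) := (hPE (γ - ε)).comp tmf_atTop
    have hRHS : Tendsto (fun n : ℕ => (P (PE (tmf n) (γ - ε))).toReal
        - (P {ω | n < Z (tmf n) ω}).toReal) atTop (𝓝 (F (γ - ε) - 0)) := hcomp.sub herrm
    rw [sub_zero] at hRHS
    filter_upwards [hRHS.eventually (eventually_gt_nhds hxF), hlo ε hε] with n h1 h2
    have : x < (P (E n)).toReal := by linarith
    exact this
  · intro x hx
    have hcont : Tendsto (fun ε : ℝ => F (γ + ε)) (𝓝 0) (𝓝 (F γ)) := by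
      have h1 : Tendsto (fun ε : ℝ => γ + ε) (𝓝 0) (𝓝 γ) := by
        have := (tendsto_const_nhds (x := γ) (f := 𝓝 (0:ℝ))).add tendsto_id
        simpa using this
      exact (hFcont.tendsto γ).comp h1
    have h2 : ∀ᶠ ε in 𝓝[>] (0:ℝ), F (γ + ε) < x :=
      eventually_nhdsWithin_of_eventually_nhds (hcont.eventually (eventually_lt_nhds hx))
    obtain ⟨ε, hxF, hε⟩ := (h2.and self_mem_nhdsWithin).exists
    have hcomp : Tendsto (fun n : ℕ => (P (PE (tpf n) (γ + ε))).toReal) atTop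
        (𝓝 (F (γ + ε))) := (hPE (γ + ε)).comp tpf_atTop
    have hRHS : Tendsto (fun n : ℕ => (P (PE (tpf n) (γ + ε))).toReal
        + (P {ω | Z (tpf n) ω < n}).toReal) atTop (𝓝 (F (γ + ε) + 0)) := hcomp.add herrp
    rw [add_zero] at hRHS
    filter_upwards [hRHS.eventually (eventually_lt_nhds hxF), hup ε hε] with n h1 h2
    have : (P (E n)).toReal < x := by linarith
    exact this
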